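/- Let n = 2^m − 1 with m ≥ 5, and let d be an odd integer with 3 ≤ d ≤ 2^{⌈m/2⌉} − 1. Then the primitive narrow-sense BCH code of length n and designed distance d over F_2 has dimension exactly n − m(d−1)/2. -/

import Mathlib

open Polynomial

set_option maxHeartbeats 1000000 in
/-- Evaluation of (the polynomial with) coefficient vector `v ∈ F₂ⁿ` at an
element `β` of `F_{2^m}`, as an `F₂`-linear map. -/
noncomputable def evalVec (m n : ℕ) (β : GaloisField 2 m) :
    (Fin n → ZMod 2) →ₗ[ZMod 2] GaloisField 2 m where
  toFun v := ∑ i : Fin n, v i • β ^ (i : ℕ)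
  map_add' a b := by
    simp only [Pi.add_apply, add_smul, Finset.sum_add_distrib]
  map_smul' c v := by
    simp only [Pi.smul_apply, smul_eq_mul, mul_smul, Finset.smul_sum, RingHom.id_apply]

/-- The primitive narrow-sense BCH code of length `n = 2^m − 1` and designed
distance `d` over `F₂`, relative to a primitive element `α` of `F_{2^m}`:
the cyclic code of all vectors whose polynomial vanishes at `α, α², …, α^(d−1)`. -/
noncomputable def BCHCode (m d : ℕ) (α : GaloisField 2 m) :
    Submodule (ZMod 2) (Fin (2 ^ m - 1) → ZMod 2) :=
  ⨅ j ∈ Finset.Icc 1 (d - 1), LinearMap.ker (evalVec m (2 ^ m - 1) (α ^ j))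

lemma key_arith (m : ℕ) (hm : 5 ≤ m) {i j k : ℕ} (hi : Odd i) (hj : Odd j)
    (hit : i ≤ 2 ^ ((m+1)/2) - 3) (hjt : j ≤ 2 ^ ((m+1)/2) - 3) (hk : k < m)
    (h : i * 2 ^ k ≡ j [MOD 2 ^ m - 1]) : k = 0 ∧ i = j := by
  set t := (m+1)/2 with ht
  have ht3 : 3 ≤ t := by omega
  have htm : t ≤ m := by omega
  have h2t : 2*t ≤ m + 1 := by omega
  have h8 : (8:ℕ) ≤ 2^t := by
    calc (8:ℕ) = 2^3 := rfl
    _ ≤ 2^t := Nat.pow_le_pow_right (by norm_num) ht3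
  have hmt2 : 2 ≤ m - t := by omega
  have h4 : (4:ℕ) ≤ 2^(m-t) := by
    calc (4:ℕ) = 2^2 := rfl
    _ ≤ 2^(m-t) := Nat.pow_le_pow_right (by norm_num) hmt2
  have hsplit : 2^t * 2^(m-t) = 2^m := by rw [← pow_add]; congr 1; omega
  have h2m : (32:ℕ) ≤ 2^m := by
    calc (32:ℕ) = 2^5 := rfl
    _ ≤ 2^m := Nat.pow_le_pow_right (by norm_num) hm
  have hjn : j < 2^m - 1 := by
    have : 2^t ≤ 2^m := Nat.pow_le_pow_right (by norm_num) htm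
    omega
  have hin : i < 2^m - 1 := by
    have : 2^t ≤ 2^m := Nat.pow_le_pow_right (by norm_num) htm
    omega
  by_cases hc : k ≤ m - t
  · have hbound : i * 2^k < 2^m - 1 := by
      have h1 : i * 2^k ≤ (2^t - 3) * 2^(m-t) :=
        Nat.mul_le_mul hit (Nat.pow_le_pow_right (by norm_num) hc)
      have h2 : (2^t - 3) * 2^(m-t) = 2^m - 3 * 2^(m-t) := by
        rw [Nat.sub_mul, hsplit]
      omega
    have heq : i * 2^k = j := by
      have h' : i * 2^k % (2^m-1) = j % (2^m-1) := h
      rwa [Nat.mod_eq_of_lt hbound, Nat.mod_eq_of_lt hjn] at h'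
    have hk0 : k = 0 := by
      by_contra hk0
      have hdd : 2 ∣ 2^k := dvd_pow_self 2 (by omega : k ≠ 0)
      have : 2 ∣ j := heq ▸ hdd.mul_left i
      obtain ⟨l, hl⟩ := hj
      omega
    subst hk0; simp at heq; exact ⟨rfl, heq⟩
  · exfalso
    push_neg at hc
    set s := m - k with hs
    have hs1 : 1 ≤ s := by omega
    have hst : s < t := by omega
    -- i ≡ j * 2^s [MOD 2^m - 1]
    have h2mod : (2:ℕ)^m ≡ 1 [MOD 2^m - 1] := by
      symm
      rw [Nat.modEq_iff_dvd' (by omega)]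
    have hmul := h.mul_right (2^s)
    have hlhs : i * 2^k * 2^s = i * 2^m := by
      rw [mul_assoc, ← pow_add]; congr 2; omega
    rw [hlhs] at hmul
    have h2 : i * 2^m ≡ i [MOD 2^m - 1] := by
      calc i * 2^m ≡ i * 1 [MOD 2^m - 1] := (h2mod.mul_left i)
      _ = i := by ring
    have hfin : i ≡ j * 2^s [MOD 2^m - 1] := h2.symm.trans hmul
    have hb : j * 2^s < 2^m - 1 := by
      have h1 : j * 2^s ≤ (2^t - 3) * 2^(t-1) :=
        Nat.mul_le_mul hjt (Nat.pow_le_pow_right (by norm_num) (by omega))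
      have h2' : (2^t - 3) * 2^(t-1) = 2^t * 2^(t-1) - 3 * 2^(t-1) := by rw [Nat.sub_mul]
      have h3 : (2:ℕ)^t * 2^(t-1) = 2^(2*t-1) := by rw [← pow_add]; congr 1; omega
      have h4' : (2:ℕ)^(2*t-1) ≤ 2^m := Nat.pow_le_pow_right (by norm_num) (by omega)
      have h5 : (4:ℕ) ≤ 2^(t-1) := by
        calc (4:ℕ) = 2^2 := rfl
        _ ≤ 2^(t-1) := Nat.pow_le_pow_right (by norm_num) (by omega)
      omega
    have heq : i = j * 2^s := by
      have h' : i % (2^m-1) = j * 2^s % (2^m-1) := hfin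
      rwa [Nat.mod_eq_of_lt hin, Nat.mod_eq_of_lt hb] at h'
    have hdd : 2 ∣ 2^s := dvd_pow_self 2 (by omega : s ≠ 0)
    have : 2 ∣ i := heq ▸ hdd.mul_left j
    obtain ⟨l, hl⟩ := hi
    omega

lemma pow_cong_iff {F : Type*} [Field F] (α : F) (n : ℕ) (hn : n ≠ 0)
    (hα : orderOf α = n) {a b : ℕ} : α ^ a = α ^ b ↔ a ≡ b [MOD n] := by
  have hne : α ≠ 0 := by
    rintro rfl
    have h1 : (0:F) ^ orderOf (0:F) = 1 := pow_orderOf_eq_one 0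
    rw [hα, zero_pow hn] at h1
    exact zero_ne_one h1
  set u := Units.mk0 α hne with hu
  have hou : orderOf u = n := by rw [← hα, ← orderOf_units]; rfl
  constructor
  · intro h
    have : u ^ a = u ^ b := by
      ext; simpa [hu] using h
    rwa [pow_eq_pow_iff_modEq, hou] at this
  · intro h
    have : u ^ a = u ^ b := by rw [pow_eq_pow_iff_modEq, hou]; exact h
    simpa [hu] using congrArg (Units.val) this

lemma adjoin_eq_top_of_frob (m : ℕ) (hm : 1 ≤ m) (x : GaloisField 2 m)
    (hx : ∀ k, 0 < k → k < m → x ^ (2:ℕ) ^ k ≠ x) :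
    Algebra.adjoin (ZMod 2) {x} = ⊤ := by
  have hint : IsIntegral (ZMod 2) x := IsIntegral.of_finite _ _
  rw [← IntermediateField.adjoin_simple_toSubalgebra_of_isAlgebraic hint.isAlgebraic]
  set K := IntermediateField.adjoin (ZMod 2) {x} with hK
  have hfr : Module.finrank (ZMod 2) (GaloisField 2 m) = m := GaloisField.finrank 2 (by omega)
  set d := Module.finrank (ZMod 2) K with hd
  have hd1 : 1 ≤ d := Module.finrank_pos
  have hdm : d ≤ m := by
    rw [← hfr]
    exact (Submodule.finrank_le (Subalgebra.toSubmodule K.toSubalgebra))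
  -- x ^ (2^d) = x
  have hxK : x ∈ K := IntermediateField.mem_adjoin_simple_self _ x
  have : Fintype K := Fintype.ofFinite K
  have hcard : Fintype.card K = 2 ^ d := by
    have b := Module.finBasis (ZMod 2) K
    rw [Module.card_fintype b]
    simp [ZMod.card, hd]
  have hpow : (⟨x, hxK⟩ : K) ^ (2:ℕ) ^ d = ⟨x, hxK⟩ := by
    rw [← hcard]
    exact FiniteField.pow_card _
  have hxd : x ^ (2:ℕ) ^ d = x := by
    have := congrArg (Subtype.val) hpow
    simpa using this
  have hdm' : d = m := by
    by_contra hne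
    exact hx d hd1 (by omega) hxd
  have htop : K.toSubalgebra.toSubmodule = ⊤ :=
    Submodule.eq_top_of_finrank_eq (by
      show Module.finrank (ZMod 2) K = _
      rw [← hd, hdm', hfr])
  have : K.toSubalgebra = ⊤ := by
    apply Subalgebra.toSubmodule_injective
    simpa using htop
  rw [this]

lemma evalVec_apply (m n : ℕ) (β : GaloisField 2 m) (v : Fin n → ZMod 2) :
    evalVec m n β v = ∑ i : Fin n, v i • β ^ (i : ℕ) := rfl

lemma zmod2_sq (c : ZMod 2) : c ^ 2 = c := by fin_cases c <;> rfl

lemma evalVec_sq (m n : ℕ) (x : GaloisField 2 m) (v : Fin n → ZMod 2) :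
    evalVec m n (x ^ 2) v = (evalVec m n x v) ^ 2 := by
  rw [evalVec_apply, evalVec_apply, sum_pow_char 2]
  refine Finset.sum_congr rfl fun i _ => ?_
  rw [Algebra.smul_def, Algebra.smul_def, mul_pow, ← map_pow, zmod2_sq, ← pow_mul, ← pow_mul,
    mul_comm 2 (i:ℕ)]

lemma aeval_sq (m : ℕ) (x : GaloisField 2 m) (p : Polynomial (ZMod 2)) :
    aeval (x ^ 2) p = (aeval x p) ^ 2 := by
  have h1 : Polynomial.expand (ZMod 2) 2 p = p ^ 2 := by
    have := Polynomial.map_frobenius_expand (R := ZMod 2) (p := 2) p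
    rwa [ZMod.frobenius_zmod, Polynomial.map_id] at this
  rw [← Polynomial.expand_aeval 2 p x, h1, map_pow]

lemma aeval_pow2k (m : ℕ) (x : GaloisField 2 m) (p : Polynomial (ZMod 2)) (k : ℕ)
    (h : aeval x p = 0) : aeval (x ^ (2:ℕ) ^ k) p = 0 := by
  induction k with
  | zero => simpa using h
  | succ k ih =>
      have : x ^ (2:ℕ) ^ (k+1) = (x ^ (2:ℕ) ^ k) ^ 2 := by
        rw [← pow_mul, pow_succ]
      rw [this, aeval_sq, ih, zero_pow]
      norm_num

lemma n_ne_zero (m : ℕ) (hm : 5 ≤ m) : (2:ℕ) ^ m - 1 ≠ 0 := by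
  have : (32:ℕ) ≤ 2^m := by
    calc (32:ℕ) = 2^5 := rfl
    _ ≤ 2^m := Nat.pow_le_pow_right (by norm_num) hm
  omega

lemma minpoly_aeval_ne_zero (m : ℕ) (hm : 5 ≤ m) (α : GaloisField 2 m)
    (hα : orderOf α = 2^m - 1) {j j' : ℕ} (hj : Odd j) (hj' : Odd j')
    (hjt : j ≤ 2^((m+1)/2) - 3) (hjt' : j' ≤ 2^((m+1)/2) - 3) (hne : j ≠ j') :
    aeval (α ^ j') (minpoly (ZMod 2) (α ^ j)) ≠ 0 := by
  intro hzero
  have hnz := n_ne_zero m hm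
  have hint : IsIntegral (ZMod 2) (α ^ j) := IsIntegral.of_finite _ _
  set g := minpoly (ZMod 2) (α ^ j) with hg
  have hmonic : g.Monic := minpoly.monic hint
  have hfr : Module.finrank (ZMod 2) (GaloisField 2 m) = m := GaloisField.finrank 2 (by omega)
  have hdeg : g.natDegree ≤ m := by
    have := minpoly.natDegree_le (A := ZMod 2) (α ^ j)
    rwa [hfr] at this
  set P := g.map (algebraMap (ZMod 2) (GaloisField 2 m)) with hP
  have hPmonic : P.Monic := hmonic.map _
  have hPne : P ≠ 0 := hPmonic.ne_zero
  have hPdeg : P.natDegree ≤ m := by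
    rw [hP, hmonic.natDegree_map]; exact hdeg
  -- the map k ↦ α ^ (j * 2^k)
  set f : ℕ → GaloisField 2 m := fun k => α ^ (j * 2 ^ k) with hf
  have hroot : ∀ k, k < m → f k ∈ P.roots := by
    intro k hk
    rw [mem_roots hPne]
    have h0 : aeval ((α ^ j) ^ (2:ℕ) ^ k) g = 0 := aeval_pow2k m _ g k (minpoly.aeval _ _)
    rw [← pow_mul] at h0
    show P.IsRoot (f k)
    rw [IsRoot, hP, eval_map, ← aeval_def]
    exact h0
  have hroot' : α ^ j' ∈ P.roots := by
    rw [mem_roots hPne]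
    show P.IsRoot _
    rw [IsRoot, hP, eval_map, ← aeval_def]
    exact hzero
  -- distinctness
  have hlt_ne : ∀ k l, k < l → l < m → f k ≠ f l := by
    intro k l hlt hl hkl
    have hmod : j * 2 ^ k ≡ j * 2 ^ l [MOD 2^m - 1] :=
      (pow_cong_iff α _ hnz hα).mp hkl
    have hmod2 : j * 2 ^ (k + (m - l)) ≡ j [MOD 2^m - 1] := by
      have h2mod : (2:ℕ)^m ≡ 1 [MOD 2^m - 1] := by
        symm; rw [Nat.modEq_iff_dvd' Nat.one_le_two_pow]
      calc j * 2 ^ (k + (m - l)) = j * 2 ^ k * 2 ^ (m - l) := by rw [mul_assoc, ← pow_add]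
      _ ≡ j * 2 ^ l * 2 ^ (m - l) [MOD 2^m - 1] := hmod.mul_right _
      _ = j * 2 ^ m := by rw [mul_assoc, ← pow_add]; congr 2; omega
      _ ≡ j * 1 [MOD 2^m - 1] := h2mod.mul_left j
      _ = j := by ring
    have := key_arith m hm hj hj hjt hjt (by omega : k + (m - l) < m) hmod2
    omega
  have hinj : Set.InjOn f (Finset.range m) := by
    intro k hk l hl hkl
    simp only [Finset.coe_range, Set.mem_Iio] at hk hl
    rcases lt_trichotomy k l with h | h | h
    · exact absurd hkl (hlt_ne k l h hl)
    · exact h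
    · exact absurd hkl.symm (hlt_ne l k h hk)
  have hnotmem : ∀ k, k < m → f k ≠ α ^ j' := by
    intro k hk heq
    have hmod : j * 2 ^ k ≡ j' [MOD 2^m - 1] := (pow_cong_iff α _ hnz hα).mp heq
    have := key_arith m hm hj hj' hjt hjt' hk hmod
    exact hne this.2
  -- counting
  classical
  set T : Finset (GaloisField 2 m) := insert (α ^ j') ((Finset.range m).image f) with hT
  have hcardim : ((Finset.range m).image f).card = m := by
    rw [Finset.card_image_of_injOn hinj, Finset.card_range]
  have hTcard : T.card = m + 1 := by
    rw [hT, Finset.card_insert_of_notMem, hcardim]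
    intro hmem
    obtain ⟨k, hk, hkeq⟩ := Finset.mem_image.mp hmem
    exact hnotmem k (Finset.mem_range.mp hk) hkeq
  have hsub : T ⊆ P.roots.toFinset := by
    intro x hx
    rw [Multiset.mem_toFinset]
    rcases Finset.mem_insert.mp hx with h1 | h1
    · rw [h1]; exact hroot'
    · obtain ⟨k, hk, hkeq⟩ := Finset.mem_image.mp h1
      exact hkeq ▸ hroot k (Finset.mem_range.mp hk)
  have : m + 1 ≤ m := by
    calc m + 1 = T.card := hTcard.symm
    _ ≤ P.roots.toFinset.card := Finset.card_le_card hsub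
    _ ≤ Multiset.card P.roots := Multiset.toFinset_card_le _
    _ ≤ P.natDegree := Polynomial.card_roots' P
    _ ≤ m := hPdeg
  omega


lemma evalVec_coeff (m n : ℕ) (β : GaloisField 2 m) (p : Polynomial (ZMod 2))
    (hp : p.natDegree < n) :
    evalVec m n β (fun i => p.coeff i) = aeval β p := by
  rw [evalVec_apply, Polynomial.aeval_eq_sum_range' hp, ← Fin.sum_univ_eq_sum_range]

lemma phi_surj (m d : ℕ) (hm : 5 ≤ m) (hd_odd : Odd d) (hd3 : 3 ≤ d)
    (hd : d ≤ 2 ^ ((m + 1) / 2) - 1)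
    (α : GaloisField 2 m) (hα : orderOf α = 2 ^ m - 1) :
    Function.Surjective
      (LinearMap.pi (fun i : Fin ((d-1)/2) => evalVec m (2^m-1) (α ^ (2*(i:ℕ)+1)))) := by
  classical
  set n := 2^m - 1 with hn
  set r := (d-1)/2 with hr
  intro c
  have hnz : n ≠ 0 := n_ne_zero m hm
  have hd2r : d - 1 = 2 * r := by
    obtain ⟨l, hl⟩ := hd_odd; omega
  set J : Fin r → ℕ := fun i => 2*(i:ℕ)+1 with hJ
  have hJodd : ∀ i, Odd (J i) := fun i => ⟨(i:ℕ), by show 2*(i:ℕ)+1 = 2*(i:ℕ)+1; rfl⟩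
  have hJle : ∀ i, J i ≤ 2^((m+1)/2) - 3 := by
    intro i
    have : (i:ℕ) < r := i.2
    have h8 : (8:ℕ) ≤ 2^((m+1)/2) := by
      calc (8:ℕ) = 2^3 := rfl
      _ ≤ _ := Nat.pow_le_pow_right (by norm_num) (by omega)
    show 2*(i:ℕ)+1 ≤ 2^((m+1)/2) - 3
    omega
  have hJinj : Function.Injective J := by
    intro a b hab; simp only [hJ] at hab
    exact Fin.ext (by omega)
  -- frobenius condition, surjectivity of aeval
  have haev : ∀ i : Fin r, Function.Surjective (aeval (R := ZMod 2) (α ^ J i)) := by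
    intro i
    have htop := adjoin_eq_top_of_frob m (by omega) (α ^ J i) (by
      intro k hk0 hkm heq
      rw [← pow_mul, mul_comm (J i)] at heq
      have hmod : J i * 2 ^ k ≡ J i [MOD n] := by
        rw [mul_comm (J i)]
        exact (pow_cong_iff α n hnz hα).mp heq
      have := key_arith m hm (hJodd i) (hJodd i) (hJle i) (hJle i) hkm hmod
      omega)
    rw [Algebra.adjoin_singleton_eq_range_aeval] at htop
    intro y
    have : y ∈ (aeval (R := ZMod 2) (α ^ J i)).range := htop ▸ Algebra.mem_top
    exact this
  set g : Fin r → Polynomial (ZMod 2) := fun i => minpoly (ZMod 2) (α ^ J i) with hg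
  set q : Fin r → Polynomial (ZMod 2) := fun i => ∏ i' ∈ Finset.univ.erase i, g i' with hq
  have hq0 : ∀ i i' : Fin r, i ≠ i' → aeval (α ^ J i) (q i') = 0 := by
    intro i i' hne
    show aeval (α ^ J i) (∏ i'' ∈ Finset.univ.erase i', g i'') = 0
    rw [map_prod]
    exact Finset.prod_eq_zero (Finset.mem_erase.mpr ⟨hne, Finset.mem_univ _⟩)
      (minpoly.aeval _ _)
  have hq1 : ∀ i : Fin r, aeval (α ^ J i) (q i) ≠ 0 := by
    intro i
    show aeval (α ^ J i) (∏ i' ∈ Finset.univ.erase i, g i') ≠ 0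
    rw [map_prod, Finset.prod_ne_zero_iff]
    intro i' hi'
    have hne : (i' : Fin r) ≠ i := (Finset.mem_erase.mp hi').1
    exact minpoly_aeval_ne_zero m hm α hα (hJodd i') (hJodd i) (hJle i') (hJle i)
      (fun h => hne (hJinj h))
  choose h hh using fun i : Fin r => haev i (c i * (aeval (α ^ J i) (q i))⁻¹)
  set p : Polynomial (ZMod 2) := ∑ i : Fin r, h i * q i with hp
  have heval : ∀ i : Fin r, aeval (α ^ J i) p = c i := by
    intro i
    rw [hp, map_sum]
    rw [Finset.sum_eq_single i]
    · rw [map_mul, hh i, mul_assoc, inv_mul_cancel₀ (hq1 i), mul_one]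
    · intro i' _ hne
      rw [map_mul, hq0 i i' (Ne.symm hne), mul_zero]
    · intro habs; exact absurd (Finset.mem_univ i) habs
  -- reduce mod X^n - 1
  have hmonic : (X ^ n - C (1 : ZMod 2)).Monic := monic_X_pow_sub_C 1 hnz
  set rem := p %ₘ (X ^ n - C (1 : ZMod 2)) with hrem
  have hdeglt : rem.natDegree < n := by
    by_cases h0 : rem = 0
    · rw [h0]; simpa using Nat.pos_of_ne_zero hnz
    · rw [natDegree_lt_iff_degree_lt h0]
      have := degree_modByMonic_lt p hmonic
      rwa [degree_X_pow_sub_C (Nat.pos_of_ne_zero hnz)] at this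
  have hvanish : ∀ i : Fin r, aeval (α ^ J i) (X ^ n - C (1 : ZMod 2)) = 0 := by
    intro i
    rw [map_sub, map_pow, aeval_X, aeval_C]
    have hone : α ^ n = 1 := by rw [← hα]; exact pow_orderOf_eq_one α
    have : (α ^ J i) ^ n = 1 := by
      rw [← pow_mul, mul_comm, pow_mul, hone, one_pow]
    rw [this, map_one, sub_self]
  have hremeval : ∀ i : Fin r, aeval (α ^ J i) rem = c i := by
    intro i
    have := modByMonic_add_div p (X ^ n - C (1 : ZMod 2))
    have h2 := congrArg (aeval (α ^ J i)) this
    rw [map_add, map_mul, hvanish i, zero_mul, add_zero] at h2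
    rw [h2, heval i]
  refine ⟨fun i => rem.coeff i, ?_⟩
  funext i
  rw [LinearMap.pi_apply]
  rw [evalVec_coeff m n _ rem hdeglt]
  exact hremeval i

/-- Let `n = 2^m − 1` with `m ≥ 5` and let `d` be odd with
`3 ≤ d ≤ 2^⌈m/2⌉ − 1`.  Then the primitive narrow-sense BCH code of length `n`
and designed distance `d` over `F₂` has dimension exactly `n − m(d−1)/2`. -/
theorem stmt12 (m d : ℕ) (hm : 5 ≤ m) (hd_odd : Odd d) (hd3 : 3 ≤ d)
    (hd : d ≤ 2 ^ ((m + 1) / 2) - 1)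
    (α : GaloisField 2 m) (hα : orderOf α = 2 ^ m - 1) :
    Module.finrank (ZMod 2) (BCHCode m d α) = (2 ^ m - 1) - m * ((d - 1) / 2) := by
  classical
  have h2m : (32:ℕ) ≤ 2^m := by
    calc (32:ℕ) = 2^5 := rfl
    _ ≤ 2^m := Nat.pow_le_pow_right (by norm_num) hm
  set n := 2^m - 1 with hn
  set r := (d-1)/2 with hr
  have hd2r : d - 1 = 2 * r := by
    obtain ⟨l, hl⟩ := hd_odd; omega
  have hr1 : 1 ≤ r := by omega
  set Φ : (Fin n → ZMod 2) →ₗ[ZMod 2] (Fin r → GaloisField 2 m) :=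
    LinearMap.pi (fun i : Fin r => evalVec m n (α ^ (2*(i:ℕ)+1))) with hΦ
  have hker : BCHCode m d α = LinearMap.ker Φ := by
    ext x
    rw [BCHCode]
    simp only [Submodule.mem_iInf, LinearMap.mem_ker, Finset.mem_Icc]
    constructor
    · intro hx
      funext i
      have h1 : 1 ≤ 2*(i:ℕ)+1 := by omega
      have h2 : 2*(i:ℕ)+1 ≤ d - 1 := by
        have : (i:ℕ) < r := i.2
        omega
      have := hx (2*(i:ℕ)+1) ⟨h1, h2⟩
      show evalVec m n (α ^ (2*(i:ℕ)+1)) x = 0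
      exact this
    · intro hx j hj
      obtain ⟨hj1, hj2⟩ := hj
      induction j using Nat.strong_induction_on with
      | _ j ih =>
        rcases Nat.even_or_odd j with he | ho
        · -- even
          obtain ⟨l, hl⟩ := he
          have hj2' : j / 2 < j := by omega
          have hhalf : evalVec m n (α ^ (j/2)) x = 0 := by
            apply ih (j/2) hj2' (by omega) (by omega)
          have : α ^ j = (α ^ (j/2)) ^ 2 := by
            rw [← pow_mul]; congr 1; omega
          rw [this, evalVec_sq, hhalf]
          norm_num
        · -- odd
          obtain ⟨l, hl⟩ := ho
          have hlr : l < r := by omega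
          have := congrFun hx ⟨l, hlr⟩
          have h0 : evalVec m n (α ^ (2*l+1)) x = 0 := this
          rw [show j = 2*l+1 from by omega]
          exact h0
  have hfr : Module.finrank (ZMod 2) (GaloisField 2 m) = m := GaloisField.finrank 2 (by omega)
  have hrange : LinearMap.range Φ = ⊤ :=
    LinearMap.range_eq_top.mpr (phi_surj m d hm hd_odd hd3 hd α hα)
  have hrk := LinearMap.finrank_range_add_finrank_ker Φ
  have hdom : Module.finrank (ZMod 2) (Fin n → ZMod 2) = n := by
    rw [Module.finrank_pi]
    simp
  have hcod : Module.finrank (ZMod 2) (LinearMap.range Φ) = r * m := by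
    rw [hrange]
    rw [finrank_top]
    rw [Module.finrank_pi_fintype]
    simp [hfr, Finset.sum_const, mul_comm]
  rw [hdom, hcod] at hrk
  rw [hker]
  rw [show Module.finrank (ZMod 2) ↥(LinearMap.ker Φ) = n - r * m from by omega]
  rw [mul_comm r m]
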